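/- arXiv:1801.05376 — 3 statements merged into one kernel-verified Lean document; each statement's English description precedes it below -/
import Mathlib

section
/- Every (7/3)-power-free infinite binary word contains, as a factor, every factor of the Thue–Morse word t. In particular, this holds for every overlap-free infinite binary word. -/
/-- The factor of the infinite word `u` of length `m` starting at position `i`. -/
def factorAt {k : ℕ} (u : ℕ → Fin k) (i m : ℕ) : List (Fin k) :=
  (List.range m).map fun j => u (i + j)

/-- `v` is a factor of the infinite word `u`. -/
def IsFactor {k : ℕ} (v : List (Fin k)) (u : ℕ → Fin k) : Prop :=
  ∃ i, v = factorAt u i v.length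

/-- Subword complexity: the number of distinct factors of length `n`. -/
noncomputable def complexity {k : ℕ} (u : ℕ → Fin k) (n : ℕ) : ℕ :=
  Set.ncard {v : List (Fin k) | v.length = n ∧ IsFactor v u}

/-- The word `w` has period `q` (`1 ≤ q ≤ |w|`, and `w(i) = w(i+q)` whenever defined). -/
def HasPer {A : Type*} (w : List A) (q : ℕ) : Prop :=
  1 ≤ q ∧ q ≤ w.length ∧ ∀ i, i + q < w.length → w[i]? = w[i + q]?

/-- The minimal period of a finite word. -/
noncomputable def minPer {A : Type*} (w : List A) : ℕ := sInf {q | HasPer w q}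

/-- The exponent of a finite word: its length divided by its minimal period. -/
noncomputable def exponent {A : Type*} (w : List A) : ℝ := (w.length : ℝ) / (minPer w : ℝ)

/-- `u` is `α`-power-free: no nonempty factor has exponent `≥ α`. -/
def PowerFree {k : ℕ} (α : ℝ) (u : ℕ → Fin k) : Prop :=
  ∀ v : List (Fin k), v ≠ [] → IsFactor v u → exponent v < α

/-- `u` is `α⁺`-power-free: no nonempty factor has exponent `> α`. -/
def PowerFreePlus {k : ℕ} (α : ℝ) (u : ℕ → Fin k) : Prop :=
  ∀ v : List (Fin k), v ≠ [] → IsFactor v u → exponent v ≤ α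

/-- Overlap-free means `2⁺`-power-free. -/
def OverlapFree {k : ℕ} (u : ℕ → Fin k) : Prop := PowerFreePlus 2 u

/-- The Thue–Morse word: `t n` is the number of 1's, mod 2, in the binary expansion of `n`. -/
def thueMorse : ℕ → Fin 2 := fun n => Fin.ofNat 2 ((Nat.digits 2 n).count 1)

-- basics

lemma factorAt_length {k} (u : ℕ → Fin k) (i m : ℕ) : (factorAt u i m).length = m := by
  simp [factorAt]

lemma factorAt_get? {k} (u : ℕ → Fin k) {i m j : ℕ} (h : j < m) :
    (factorAt u i m)[j]? = some (u (i + j)) := by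
  simp [factorAt, List.getElem?_map, List.getElem?_range h]

lemma isFactor_factorAt {k} (u : ℕ → Fin k) (i m : ℕ) : IsFactor (factorAt u i m) u :=
  ⟨i, by rw [factorAt_length]⟩

lemma factorAt_succ {k} (u : ℕ → Fin k) (i m : ℕ) :
    factorAt u i (m+1) = factorAt u i m ++ [u (i+m)] := by
  simp [factorAt, List.range_succ]

lemma factorAt_add {k} (u : ℕ → Fin k) (a m n : ℕ) :
    factorAt u a (m+n) = factorAt u a m ++ factorAt u (a+m) n := by
  simp only [factorAt, List.range_add, List.map_append, List.map_map]
  congr 1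
  apply List.map_congr_left
  intro j _
  simp only [Function.comp]
  congr 1
  omega

lemma hasPer_factorAt {k} (u : ℕ → Fin k) {i q m : ℕ} (hq : 1 ≤ q) (hqm : q ≤ m)
    (hper : ∀ j, j + q < m → u (i+j) = u (i+(j+q))) : HasPer (factorAt u i m) q := by
  refine ⟨hq, by rw [factorAt_length]; exact hqm, ?_⟩
  intro j hj
  rw [factorAt_length] at hj
  rw [factorAt_get? u (by omega), factorAt_get? u hj]
  exact congrArg some (hper j hj)

lemma hasPer_self {A : Type*} {w : List A} (h : w ≠ []) : HasPer w w.length :=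
  ⟨List.length_pos_iff.mpr h, le_refl _, fun i hi => by omega⟩

lemma minPer_le {A : Type*} {w : List A} {q : ℕ} (h : HasPer w q) : minPer w ≤ q :=
  Nat.sInf_le h

lemma minPer_hasPer {A : Type*} {w : List A} (h : w ≠ []) : HasPer w (minPer w) :=
  Nat.sInf_mem (⟨w.length, hasPer_self h⟩ : Set.Nonempty {q | HasPer w q})

lemma exponent_ge {A : Type*} {w : List A} {q : ℕ} (h : HasPer w q) :
    (w.length : ℝ) / (q : ℝ) ≤ exponent w := by
  have hne : w ≠ [] := by
    intro he; subst he; have h2 := h.2.1; have h1 := h.1; simp at h2; omega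
  have h1 : 1 ≤ minPer w := (minPer_hasPer hne).1
  have h2 : minPer w ≤ q := minPer_le h
  unfold exponent
  apply div_le_div_of_nonneg_left (by positivity) (by exact_mod_cast h1) (by exact_mod_cast h2)

lemma no_power {u : ℕ → Fin 2} (pf : PowerFree (7/3) u) {i q m : ℕ}
    (hq : 1 ≤ q) (hqm : q ≤ m)
    (hper : ∀ j, j + q < m → u (i+j) = u (i+(j+q)))
    (hexp : (7:ℝ)/3 ≤ (m:ℝ)/(q:ℝ)) : False := by
  have hP := hasPer_factorAt u hq hqm hper
  have hne : factorAt u i m ≠ [] := by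
    intro he
    have := factorAt_length u i m
    rw [he] at this; simp at this; omega
  have h1 := pf _ hne (isFactor_factorAt u i m)
  have h2 := exponent_ge hP
  rw [factorAt_length] at h2
  linarith

def mu (z : List (Fin 2)) : List (Fin 2) := z.flatMap fun a => [a, 1 - a]

@[simp] lemma mu_nil : mu [] = [] := rfl
@[simp] lemma mu_cons (a : Fin 2) (z : List (Fin 2)) : mu (a :: z) = a :: (1-a) :: mu z := rfl
lemma mu_append (x y : List (Fin 2)) : mu (x ++ y) = mu x ++ mu y := by
  simp [mu]

@[simp] lemma mu_length (z : List (Fin 2)) : (mu z).length = 2 * z.length := by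
  induction z with
  | nil => rfl
  | cons a z ih => simp [ih]; omega

lemma mu_get_even (z : List (Fin 2)) (n : ℕ) : (mu z)[2*n]? = z[n]? := by
  induction z generalizing n with
  | nil => rfl
  | cons a z ih =>
    match n with
    | 0 => rfl
    | n+1 =>
      rw [show 2*(n+1) = (2*n)+1+1 from by ring]
      simpa using ih n

lemma mu_get_odd (z : List (Fin 2)) (n : ℕ) :
    (mu z)[2*n+1]? = (z[n]?).map (fun a => 1 - a) := by
  induction z generalizing n with
  | nil => rfl
  | cons a z ih =>
    match n with
    | 0 => rfl
    | n+1 =>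
      rw [show 2*(n+1)+1 = (2*n+1)+1+1 from by ring]
      simpa using ih n

lemma hasPer_mu {z : List (Fin 2)} {q : ℕ} (h : HasPer z q) : HasPer (mu z) (2*q) := by
  obtain ⟨h1, h2, h3⟩ := h
  refine ⟨by omega, by rw [mu_length]; omega, ?_⟩
  intro i hi
  rw [mu_length] at hi
  rcases Nat.even_or_odd i with ⟨n, hn⟩ | ⟨n, hn⟩
  · rw [show i = 2*n from by omega, show 2*n+2*q = 2*(n+q) from by ring,
      mu_get_even, mu_get_even, h3 n (by omega)]
  · rw [show i = 2*n+1 from by omega, show 2*n+1+2*q = 2*(n+q)+1 from by ring,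
      mu_get_odd, mu_get_odd, h3 n (by omega)]

lemma exponent_mu_ge {z : List (Fin 2)} (hz : z ≠ []) : exponent z ≤ exponent (mu z) := by
  have hmem := minPer_hasPer hz
  have h1 : 1 ≤ minPer z := hmem.1
  have key := exponent_ge (hasPer_mu hmem)
  have hlen : ((mu z).length : ℝ) = 2 * (z.length : ℝ) := by rw [mu_length]; push_cast; ring
  rw [hlen] at key
  have h2 : ((2*minPer z : ℕ) : ℝ) = 2 * (minPer z : ℝ) := by push_cast; ring
  rw [h2] at key
  have h3 : (0:ℝ) < (minPer z : ℝ) := by exact_mod_cast h1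
  calc exponent z = (z.length : ℝ) / (minPer z : ℝ) := rfl
    _ = 2 * (z.length:ℝ) / (2 * (minPer z : ℝ)) := by
        rw [mul_div_mul_left _ _ (two_ne_zero)]
    _ ≤ exponent (mu z) := key

lemma mu_ne_nil {z : List (Fin 2)} (hz : z ≠ []) : mu z ≠ [] := by
  intro h
  have := mu_length z
  rw [h] at this
  simp at this
  exact hz this

lemma pf_desub {u v : ℕ → Fin 2} (pf : PowerFree (7/3) u)
    (h : ∀ z : List (Fin 2), IsFactor z v → IsFactor (mu z) u) : PowerFree (7/3) v :=
  fun z hz hf => lt_of_le_of_lt (exponent_mu_ge hz) (pf (mu z) (mu_ne_nil hz) (h z hf))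

-- Fin 2 helpers
lemma fin2_flip {a b : Fin 2} (h : a ≠ b) : b = 1 - a := by
  revert h; revert a b; decide

lemma fin2_alt5 (x0 x1 x2 x3 x4 : Fin 2) (h0 : x0 ≠ x1) (h1 : x1 ≠ x2) (h2 : x2 ≠ x3)
    (h3 : x3 ≠ x4) : x0 = x2 ∧ x1 = x3 ∧ x2 = x4 := by
  revert h0 h1 h2 h3; revert x0 x1 x2 x3 x4; decide

lemma fin2_L3 (x0 x1 x2 x3 x4 x5 x6 : Fin 2) (h1 : x1 = x2) (h2 : x2 ≠ x3) (h3 : x3 ≠ x4)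
    (h4 : x4 = x5) :
    x0 = x1 ∨ x5 = x6 ∨ (x0 = x3 ∧ x1 = x4 ∧ x2 = x5 ∧ x3 = x6) := by
  revert h1 h2 h3 h4; revert x0 x1 x2 x3 x4 x5 x6; decide

section Comb
variable {u : ℕ → Fin 2} (pf : PowerFree (7/3) u)
include pf

-- no cubes
lemma no_cube {c : ℕ} (h1 : u c = u (c+1)) (h2 : u (c+1) = u (c+2)) : False := by
  apply no_power pf (i := c) (q := 1) (m := 3) le_rfl (by omega) ?_ (by norm_num)
  intro j hj
  have hj' : j < 2 := by omega
  interval_cases j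
  · simpa using h1
  · simpa using h2

-- in any 4 consecutive positions there is an equal pair
lemma alt_window (i : ℕ) :
    u i = u (i+1) ∨ u (i+1) = u (i+2) ∨ u (i+2) = u (i+3) ∨ u (i+3) = u (i+4) := by
  by_contra h
  push_neg at h
  obtain ⟨h0, h1, h2, h3⟩ := h
  obtain ⟨e0, e1, e2⟩ := fin2_alt5 (u i) (u (i+1)) (u (i+2)) (u (i+3)) (u (i+4)) h0 h1 h2 h3
  apply no_power pf (i := i) (q := 2) (m := 5) (by omega) (by omega) ?_ (by norm_num)
  intro j hj
  have hj' : j < 3 := by omega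
  interval_cases j
  · simpa using e0
  · simpa using e1
  · simpa using e2

-- two equal pairs at positions ≥ 1 have the same parity
lemma same_parity : ∀ n c, 1 ≤ c → n % 2 = 1 → u c = u (c+1) → u (c+n) = u (c+n+1) → False := by
  intro n
  induction n using Nat.strong_induction_on with
  | _ n IH =>
    intro c hc hodd h1 h2
    by_cases he : ∃ e, c < e ∧ e < c + n ∧ u e = u (e+1)
    · obtain ⟨e, he1, he2, he3⟩ := he
      by_cases hp : (e - c) % 2 = 1
      · exact IH (e-c) (by omega) c hc hp h1
          (by rw [show c + (e-c) = e from by omega]; exact he3)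
      · refine IH (n - (e-c)) (by omega) e (by omega) (by omega) he3 ?_
        rw [show e + (n - (e-c)) = c + n from by omega]
        exact h2
    · push_neg at he
      rcases Nat.lt_or_ge n 5 with h5 | h5
      · -- n = 1 or n = 3
        rcases (by omega : n = 1 ∨ n = 3) with rfl | rfl
        · exact no_cube pf h1 h2
        · -- the n = 3 case
          obtain ⟨c', rfl⟩ : ∃ c', c = c' + 1 := ⟨c - 1, by omega⟩
          have e1 : u (c'+2) ≠ u (c'+3) := he (c'+2) (by omega) (by omega)
          have e2 : u (c'+3) ≠ u (c'+4) := he (c'+3) (by omega) (by omega)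
          have h1' : u (c'+1) = u (c'+2) := h1
          have h2' : u (c'+4) = u (c'+5) := h2
          rcases fin2_L3 (u c') (u (c'+1)) (u (c'+2)) (u (c'+3)) (u (c'+4)) (u (c'+5))
            (u (c'+6)) h1' e1 e2 h2' with hx | hx | ⟨p0, p1, p2, p3⟩
          · exact no_cube pf hx h1'
          · exact no_cube pf h2' hx
          · apply no_power pf (i := c') (q := 3) (m := 7) (by omega) (by omega) ?_ (by norm_num)
            intro j hj
            have hj' : j < 4 := by omega
            interval_cases j
            · simpa using p0
            · simpa using p1
            · simpa using p2
            · simpa using p3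
      · -- n ≥ 5 : alternation window inside gives an equal pair strictly between
        rcases alt_window pf (c+1) with h | h | h | h
        · exact he (c+1) (by omega) (by omega) h
        · exact he (c+2) (by omega) (by omega) (by simpa [show c+1+1 = c+2 from rfl] using h)
        · exact he (c+3) (by omega) (by omega) (by simpa [show c+1+2 = c+3 from rfl] using h)
        · exact he (c+4) (by omega) (by omega) (by simpa [show c+1+3 = c+4 from rfl] using h)

end Comb

lemma factorAt_mul2 {u v : ℕ → Fin 2} {j : ℕ}
    (h0 : ∀ n, u (j + 2*n) = v n) (h1 : ∀ n, u (j + 2*n + 1) = 1 - v n) (m : ℕ) :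
    ∀ L, factorAt u (j + 2*m) (2*L) = mu (factorAt v m L) := by
  intro L
  induction L with
  | zero => simp [factorAt]
  | succ L IH =>
    rw [show 2*(L+1) = (2*L+1)+1 from by ring, factorAt_succ, factorAt_succ, IH,
      factorAt_succ, mu_append]
    have e0 : u (j + 2*m + 2*L) = v (m + L) := by
      rw [show j + 2*m + 2*L = j + 2*(m+L) from by ring]; exact h0 (m+L)
    have e1 : u (j + 2*m + (2*L+1)) = 1 - v (m + L) := by
      rw [show j + 2*m + (2*L+1) = j + 2*(m+L) + 1 from by ring]; exact h1 (m+L)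
    rw [e0, e1]
    simp [mu]

lemma exists_desub {u : ℕ → Fin 2} (pf : PowerFree (7/3) u) :
    ∃ v : ℕ → Fin 2, PowerFree (7/3) v ∧
      ∀ z : List (Fin 2), IsFactor z v → IsFactor (mu z) u := by
  -- find an equal pair at position e ≥ 1
  obtain ⟨e, he1, he4, heq⟩ : ∃ e, 1 ≤ e ∧ e ≤ 4 ∧ u e = u (e+1) := by
    rcases alt_window pf 1 with h | h | h | h
    · exact ⟨1, by omega, by omega, h⟩
    · exact ⟨2, by omega, by omega, h⟩
    · exact ⟨3, by omega, by omega, h⟩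
    · exact ⟨4, by omega, by omega, h⟩
  set j : ℕ := if e % 2 = 0 then 1 else 2 with hj
  have hj1 : 1 ≤ j := by rw [hj]; split <;> omega
  have hjp : j % 2 ≠ e % 2 := by rw [hj]; split <;> omega
  have hno : ∀ n, u (j + 2*n) ≠ u (j + 2*n + 1) := by
    intro n hne
    set i := j + 2*n with hi
    have hie : i ≠ e := by intro h; rw [h] at hi; omega
    rcases Nat.lt_or_ge i e with h | h
    · exact same_parity pf (e - i) i (by omega) (by omega) hne
        (by rw [show i + (e-i) = e from by omega]; exact heq)
    · exact same_parity pf (i - e) e (by omega) (by omega) heq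
        (by rw [show e + (i-e) = i from by omega]; exact hne)
  set v : ℕ → Fin 2 := fun n => u (j + 2*n) with hv
  have h0 : ∀ n, u (j + 2*n) = v n := fun n => rfl
  have h1 : ∀ n, u (j + 2*n + 1) = 1 - v n := fun n => fin2_flip (hno n)
  have htrans : ∀ z : List (Fin 2), IsFactor z v → IsFactor (mu z) u := by
    intro z ⟨m, hm⟩
    refine ⟨j + 2*m, ?_⟩
    rw [mu_length, hm, factorAt_length, ← factorAt_mul2 h0 h1 m z.length, hm, factorAt_length]
  exact ⟨v, pf_desub pf htrans, htrans⟩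

lemma contains_letters {u : ℕ → Fin 2} (pf : PowerFree (7/3) u) (a : Fin 2) :
    IsFactor [a] u := by
  by_cases h : ∃ i, u i = a
  · obtain ⟨i, hi⟩ := h
    exact ⟨i, by simp [factorAt, List.range_succ, hi]⟩
  · push_neg at h
    exfalso
    apply no_power pf (i := 0) (q := 1) (m := 3) le_rfl (by omega) ?_ (by norm_num)
    intro k hk
    have e1 : u k = 1 - a := fin2_flip (fun hh => h k hh.symm)
    have e2 : u (k+1) = 1 - a := fin2_flip (fun hh => h (k+1) hh.symm)
    rw [show (0:ℕ) + k = k from by omega, show 0 + (k+1) = k+1 from by omega, e1, e2]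

lemma contains_mu_iter : ∀ (n : ℕ) (u : ℕ → Fin 2), PowerFree (7/3) u →
    ∀ a : Fin 2, IsFactor (mu^[n] [a]) u := by
  intro n
  induction n with
  | zero => exact fun u pf a => contains_letters pf a
  | succ n IH =>
    intro u pf a
    obtain ⟨v, pfv, htrans⟩ := exists_desub pf
    rw [Function.iterate_succ_apply']
    exact htrans _ (IH v pfv a)

lemma fin2_add_one (a : Fin 2) : a + 1 = 1 - a := by revert a; decide

lemma tm_even (n : ℕ) : thueMorse (2*n) = thueMorse n := by
  rcases Nat.eq_zero_or_pos n with rfl | hn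
  · rfl
  · unfold thueMorse
    rw [Nat.digits_def' (by norm_num : 1 < 2) (by omega : 0 < 2*n),
      Nat.mul_mod_right, Nat.mul_div_cancel_left _ (by norm_num : 0 < 2)]
    have hc : (0 :: Nat.digits 2 n).count 1 = (Nat.digits 2 n).count 1 := by
      rw [List.count_cons]
      norm_num
    rw [hc]

lemma tm_odd (n : ℕ) : thueMorse (2*n+1) = 1 - thueMorse n := by
  unfold thueMorse
  rw [Nat.digits_def' (by norm_num : 1 < 2) (by omega : 0 < 2*n+1),
    show (2*n+1) % 2 = 1 from by omega, show (2*n+1) / 2 = n from by omega]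
  rw [List.count_cons]
  norm_num
  generalize List.count 1 (Nat.digits 2 n) = c
  apply Fin.ext
  simp only [Fin.val_natCast, Fin.sub_def, Fin.val_one]
  omega

lemma tm_prefix : ∀ n : ℕ, factorAt thueMorse 0 (2^n) = mu^[n] [(0 : Fin 2)] := by
  have h0 : ∀ n, thueMorse (0 + 2*n) = thueMorse n := by intro n; rw [Nat.zero_add, tm_even]
  have h1 : ∀ n, thueMorse (0 + 2*n + 1) = 1 - thueMorse n := by
    intro n; rw [Nat.zero_add, tm_odd]
  intro n
  induction n with
  | zero =>
    have ht0 : thueMorse 0 = 0 := by simp [thueMorse]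
    simp only [factorAt, pow_zero, show List.range 1 = [0] from rfl, List.map_cons,
      List.map_nil, Nat.add_zero, ht0, Function.iterate_zero, id]
  | succ n IH =>
    have := factorAt_mul2 h0 h1 0 (2^n)
    rw [show (0:ℕ) + 2*0 = 0 from rfl] at this
    rw [show 2^(n+1) = 2*2^n from by ring, this, IH, Function.iterate_succ_apply']

lemma factor_extract {u w : ℕ → Fin 2} {a b i L R : ℕ}
    (h : factorAt u a (i + (L + R)) = factorAt w b (i + (L + R))) :
    factorAt u (a + i) L = factorAt w (b + i) L := by
  rw [factorAt_add, factorAt_add, factorAt_add, factorAt_add] at h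
  have h1 := (List.append_inj h (by rw [factorAt_length, factorAt_length])).2
  exact (List.append_inj h1 (by rw [factorAt_length, factorAt_length])).1

lemma tm_factor_of_pf {u : ℕ → Fin 2} (pf : PowerFree (7/3) u)
    {v : List (Fin 2)} (hv : IsFactor v thueMorse) : IsFactor v u := by
  obtain ⟨i, hi⟩ := hv
  set L := v.length with hL
  have hlt : i + L < 2^(i+L) := Nat.lt_two_pow_self
  set n := i + L with hn
  obtain ⟨i0, hi0⟩ := contains_mu_iter n u pf 0
  rw [← tm_prefix n] at hi0
  rw [factorAt_length] at hi0
  -- hi0 : factorAt thueMorse 0 (2^n) = factorAt u i0 (2^n)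
  have hsplit : 2^n = i + (L + (2^n - (i + L))) := by omega
  rw [hsplit] at hi0
  have := factor_extract hi0
  rw [Nat.zero_add] at this
  refine ⟨i0 + i, ?_⟩
  rw [hi, factorAt_length]
  exact this

/-- Every (7/3)-power-free infinite binary word contains every factor of the
Thue–Morse word; in particular, so does every overlap-free infinite binary word. -/
theorem every_73_free_contains_TM_factors :
    (∀ u : ℕ → Fin 2, PowerFree (7 / 3) u →
      ∀ v : List (Fin 2), IsFactor v thueMorse → IsFactor v u) ∧
    (∀ u : ℕ → Fin 2, OverlapFree u →
      ∀ v : List (Fin 2), IsFactor v thueMorse → IsFactor v u) := by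
  constructor
  · exact fun u pf v hv => tm_factor_of_pf pf hv
  · intro u hov v hv
    refine tm_factor_of_pf ?_ hv
    intro z hz hf
    have := hov z hz hf
    have h23 : (2:ℝ) < 7/3 := by norm_num
    linarith
end

section
/- The subword complexity of the twisted Thue–Morse word t′ satisfies, for all n ≥ 4 and the integer i ≥ 2 with 2^i ≤ n ≤ 2^{i+1}: p_{t′}(n+1) = 4n − 3·2^{i−2} if 2^i ≤ n ≤ 3·2^{i−1}; p_{t′}(n+1) = 3n + 3·2^{i−2} if 3·2^{i−1} ≤ n ≤ 7·2^{i−2}; and p_{t′}(n+1) = 2n + 5·2^{i−1} if 7·2^{i−2} ≤ n ≤ 2^{i+1}. -/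
/-- The twisted Thue–Morse word: `t' n` is the number of 0's, mod 2,
in the binary expansion of `n` (the expansion of 0 being empty). -/
def twistedTM : ℕ → Fin 2 := fun n => Fin.ofNat 2 ((Nat.digits 2 n).count 0)

namespace TTM

lemma tp_even (k : ℕ) (h : 1 ≤ k) : twistedTM (2*k) = twistedTM k + 1 := by
  unfold twistedTM
  rw [Nat.digits_def' (by norm_num : 1 < 2) (by omega : 0 < 2*k)]
  simp [Nat.mul_div_cancel_left _ (by norm_num : 0 < 2), Nat.mul_mod_right]
  apply Fin.ext; simp [Fin.val_add]

lemma tp_odd (k : ℕ) : twistedTM (2*k+1) = twistedTM k := by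
  unfold twistedTM
  rw [Nat.digits_def' (by norm_num : 1 < 2) (by omega : 0 < 2*k+1)]
  have h1 : (2*k+1) % 2 = 1 := by omega
  have h2 : (2*k+1) / 2 = k := by omega
  rw [h1, h2]
  simp

lemma fin2_cases (x : Fin 2) : x = 0 ∨ x = 1 := by revert x; decide

lemma fin2_ne_add_one (x : Fin 2) : x + 1 ≠ x := by revert x; decide

lemma fin2_ne_iff (x y : Fin 2) : x ≠ y + 1 ↔ x = y := by revert x y; decide

lemma length_factorAt (u : ℕ → Fin 2) (i m : ℕ) : (factorAt u i m).length = m := by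
  simp [factorAt]

lemma factorAt_getD (u : ℕ → Fin 2) (i m j : ℕ) (h : j < m) :
    (factorAt u i m).getD j 0 = u (i + j) := by
  rw [List.getD_eq_getElem _ _ (by simpa [factorAt] using h)]
  simp [factorAt]

lemma factorAt_eq_iff (u : ℕ → Fin 2) (i j m : ℕ) :
    factorAt u i m = factorAt u j m ↔ ∀ l < m, u (i + l) = u (j + l) := by
  constructor
  · intro h l hl
    have h2 := congrArg (fun v => v.getD l 0) h
    rwa [factorAt_getD _ _ _ _ hl, factorAt_getD _ _ _ _ hl] at h2
  · intro h
    apply List.ext_getElem (by simp [factorAt])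
    intro l h1 h2
    simp only [factorAt, List.getElem_map, List.getElem_range]
    exact h l (by simpa [factorAt] using h1)

/-- The "even-position" desubstitution image. -/
def E0 (m : ℕ) (w : List (Fin 2)) : List (Fin 2) :=
  List.ofFn (fun l : Fin m => if (l : ℕ) % 2 = 0 then w.getD ((l:ℕ)/2) 0 + 1 else w.getD ((l:ℕ)/2) 0)

/-- The "odd-position" desubstitution image. -/
def E1 (m : ℕ) (w : List (Fin 2)) : List (Fin 2) :=
  List.ofFn (fun l : Fin m => if (l : ℕ) % 2 = 0 then w.getD ((l:ℕ)/2) 0 else w.getD ((l:ℕ)/2 + 1) 0 + 1)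

lemma E0_getD (m : ℕ) (w : List (Fin 2)) (l : ℕ) (h : l < m) :
    (E0 m w).getD l 0 = if l % 2 = 0 then w.getD (l/2) 0 + 1 else w.getD (l/2) 0 := by
  rw [List.getD_eq_getElem _ _ (by simpa [E0] using h)]
  simp [E0]

lemma E1_getD (m : ℕ) (w : List (Fin 2)) (l : ℕ) (h : l < m) :
    (E1 m w).getD l 0 = if l % 2 = 0 then w.getD (l/2) 0 else w.getD (l/2 + 1) 0 + 1 := by
  rw [List.getD_eq_getElem _ _ (by simpa [E1] using h)]
  simp [E1]

lemma length_E0 (m : ℕ) (w : List (Fin 2)) : (E0 m w).length = m := by simp [E0]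
lemma length_E1 (m : ℕ) (w : List (Fin 2)) : (E1 m w).length = m := by simp [E1]

lemma cover_even (k m : ℕ) (hk : 1 ≤ k) :
    factorAt twistedTM (2*k) m = E0 m (factorAt twistedTM k ((m+1)/2)) := by
  apply List.ext_getElem (by simp [factorAt, E0])
  intro l h1 h2
  have hl : l < m := by simpa [factorAt] using h1
  have e1 : (factorAt twistedTM (2*k) m)[l] = twistedTM (2*k+l) := by
    simp [factorAt]
  have e2 : (E0 m (factorAt twistedTM k ((m+1)/2)))[l]
      = (E0 m (factorAt twistedTM k ((m+1)/2))).getD l 0 := by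
    rw [List.getD_eq_getElem _ _ (by simpa [E0] using hl)]
  rw [e1, e2, E0_getD _ _ _ hl]
  rcases Nat.even_or_odd l with he | ho
  · have h2 : l % 2 = 0 := Nat.even_iff.mp he
    rw [if_pos h2, factorAt_getD _ _ _ _ (by omega)]
    have : 2*k + l = 2*(k + l/2) := by omega
    rw [this, tp_even _ (by omega)]
  · have h2 : l % 2 = 1 := Nat.odd_iff.mp ho
    rw [if_neg (by omega), factorAt_getD _ _ _ _ (by omega)]
    have : 2*k + l = 2*(k + l/2) + 1 := by omega
    rw [this, tp_odd]

lemma cover_odd (k m : ℕ) :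
    factorAt twistedTM (2*k+1) m = E1 m (factorAt twistedTM k (m/2+1)) := by
  apply List.ext_getElem (by simp [factorAt, E1])
  intro l h1 h2
  have hl : l < m := by simpa [factorAt] using h1
  have e1 : (factorAt twistedTM (2*k+1) m)[l] = twistedTM (2*k+1+l) := by
    simp [factorAt]
  have e2 : (E1 m (factorAt twistedTM k (m/2+1)))[l]
      = (E1 m (factorAt twistedTM k (m/2+1))).getD l 0 := by
    rw [List.getD_eq_getElem _ _ (by simpa [E1] using hl)]
  rw [e1, e2, E1_getD _ _ _ hl]
  rcases Nat.even_or_odd l with he | ho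
  · have h2 : l % 2 = 0 := Nat.even_iff.mp he
    rw [if_pos h2, factorAt_getD _ _ _ _ (by omega)]
    have : 2*k + 1 + l = 2*(k + l/2) + 1 := by omega
    rw [this, tp_odd]
  · have h2 : l % 2 = 1 := Nat.odd_iff.mp ho
    rw [if_neg (by omega), factorAt_getD _ _ _ _ (by omega)]
    have : 2*k + 1 + l = 2*(k + l/2 + 1) := by omega
    rw [this, tp_even _ (by omega), ← Nat.add_assoc]


lemma E0_injOn (m : ℕ) : Set.InjOn (E0 m) {w | w.length = (m+1)/2} := by
  intro w hw w' hw' h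
  simp only [Set.mem_setOf_eq] at hw hw'
  have key : ∀ l < m, (E0 m w).getD l 0 = (E0 m w').getD l 0 := by
    intro l hl; rw [h]
  apply List.ext_getElem (by omega)
  intro j hj hj'
  rw [hw] at hj
  by_cases hc : 2*j+1 < m
  · have := key (2*j+1) hc
    rw [E0_getD _ _ _ hc, E0_getD _ _ _ hc, if_neg (by omega), if_neg (by omega)] at this
    have hq : (2*j+1)/2 = j := by omega
    rw [hq] at this
    rw [List.getD_eq_getElem w 0 (by omega), List.getD_eq_getElem w' 0 (by omega)] at this
    exact this
  · have h2j : 2*j < m := by omega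
    have := key (2*j) h2j
    rw [E0_getD _ _ _ h2j, E0_getD _ _ _ h2j, if_pos (by omega), if_pos (by omega)] at this
    have hq : (2*j)/2 = j := by omega
    rw [hq] at this
    rw [List.getD_eq_getElem w 0 (by omega), List.getD_eq_getElem w' 0 (by omega)] at this
    exact add_right_cancel this

lemma E1_injOn (m : ℕ) (hm : 1 ≤ m) : Set.InjOn (E1 m) {w | w.length = m/2+1} := by
  intro w hw w' hw' h
  simp only [Set.mem_setOf_eq] at hw hw'
  have key : ∀ l < m, (E1 m w).getD l 0 = (E1 m w').getD l 0 := by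
    intro l hl; rw [h]
  apply List.ext_getElem (by omega)
  intro j hj hj'
  rw [hw] at hj
  by_cases hc : 2*j < m
  · have := key (2*j) hc
    rw [E1_getD _ _ _ hc, E1_getD _ _ _ hc, if_pos (by omega), if_pos (by omega)] at this
    have hq : (2*j)/2 = j := by omega
    rw [hq] at this
    rw [List.getD_eq_getElem w 0 (by omega), List.getD_eq_getElem w' 0 (by omega)] at this
    exact this
  · -- here m is even, j = m/2, use odd position 2*j-1 = m-1
    have hj1 : 1 ≤ j := by omega
    have hc2 : 2*j-1 < m := by omega
    have := key (2*j-1) hc2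
    rw [E1_getD _ _ _ hc2, E1_getD _ _ _ hc2, if_neg (by omega), if_neg (by omega)] at this
    have hq : (2*j-1)/2 + 1 = j := by omega
    rw [hq] at this
    rw [List.getD_eq_getElem w 0 (by omega), List.getD_eq_getElem w' 0 (by omega)] at this
    exact add_right_cancel this

lemma pair (j : ℕ) (hj : 1 ≤ j) : twistedTM (2*j) ≠ twistedTM (2*j+1) := by
  rw [tp_even _ hj, tp_odd]
  exact fin2_ne_add_one _

lemma tpval : twistedTM 0 = 0 ∧ twistedTM 1 = 0 ∧ twistedTM 2 = 1 := by
  refine ⟨?_, ?_, ?_⟩ <;> simp [twistedTM]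

lemma L0 (k : ℕ) : ¬ (twistedTM k = twistedTM (k+1) ∧ twistedTM (k+1) = twistedTM (k+2)) := by
  rintro ⟨ha, hb⟩
  rcases Nat.eq_zero_or_pos k with rfl | hk
  · rw [tpval.1, tpval.2.1] at *
    rw [tpval.2.2] at hb
    simp at hb
  · rcases Nat.even_or_odd k with he | ho
    · obtain ⟨j, rfl⟩ := he
      have hjj : j + j = 2*j := by ring
      rw [hjj] at ha hk
      exact pair j (by omega) ha
    · obtain ⟨j, rfl⟩ := ho
      rw [show 2*j+1+2 = 2*(j+1)+1 by ring, show 2*j+1+1 = 2*(j+1) by ring] at hb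
      exact pair (j+1) (by omega) hb

lemma alt (i : ℕ) (hi : 1 ≤ i) :
    ¬ (∀ l, l + 1 < 5 → twistedTM (i+l) ≠ twistedTM (i+l+1)) := by
  intro h
  rcases Nat.even_or_odd i with he | ho
  · obtain ⟨j, rfl⟩ := he
    have hjj : j + j = 2*j := by ring
    rw [hjj] at h hi
    have h1 := h 1 (by omega)
    have h2 := h 3 (by omega)
    rw [show 2*j+1+1 = 2*(j+1) by ring] at h1
    rw [show 2*j+3+1 = 2*(j+2) by ring, show 2*j+3 = 2*(j+1)+1 by ring] at h2
    rw [tp_odd, tp_even _ (by omega)] at h1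
    rw [tp_odd, tp_even _ (by omega)] at h2
    exact L0 j ⟨(fin2_ne_iff _ _).mp h1, (fin2_ne_iff _ _).mp h2⟩
  · obtain ⟨j, rfl⟩ := ho
    have h1 := h 0 (by omega)
    have h2 := h 2 (by omega)
    rw [show 2*j+1+0+1 = 2*(j+1) by ring, show 2*j+1+0 = 2*j+1 by ring,
      tp_odd, tp_even _ (by omega)] at h1
    rw [show 2*j+1+2+1 = 2*(j+2) by ring, show 2*j+1+2 = 2*(j+1)+1 by ring,
      tp_odd, tp_even _ (by omega)] at h2
    exact L0 j ⟨(fin2_ne_iff _ _).mp h1, (fin2_ne_iff _ _).mp h2⟩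

lemma no_even_odd (m k k' : ℕ) (hm : 5 ≤ m) (hk : 1 ≤ k) :
    factorAt twistedTM (2*k) m ≠ factorAt twistedTM (2*k'+1) m := by
  intro h
  rw [factorAt_eq_iff] at h
  apply alt (2*k) (by omega)
  intro l hl
  rcases Nat.even_or_odd l with he | ho
  · obtain ⟨j, rfl⟩ := he
    rw [show j + j = 2*j by ring, show 2*k + 2*j = 2*(k+j) by ring]
    exact pair (k+j) (by omega)
  · obtain ⟨j, rfl⟩ := ho
    have hjj := h (2*j+1) (by omega)
    have hjj2 := h (2*j+2) (by omega)
    rw [show 2*k+(2*j+1)+1 = 2*k+(2*j+2) by ring, hjj, hjj2,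
      show 2*k'+1+(2*j+2) = 2*(k'+j+1)+1 by ring,
      show 2*k'+1+(2*j+1) = 2*(k'+j+1) by ring]
    exact pair (k'+j+1) (by omega)


/-- The set of factors of `t'` of length `m`. -/
def Fs (m : ℕ) : Set (List (Fin 2)) := {v | v.length = m ∧ IsFactor v twistedTM}

/-- The set of factors of `t'` of length `m` occurring at a position `≥ 1`. -/
def As (m : ℕ) : Set (List (Fin 2)) :=
  {v | v.length = m ∧ ∃ i, 1 ≤ i ∧ v = factorAt twistedTM i m}

lemma complexity_eq (m : ℕ) : complexity twistedTM m = (Fs m).ncard := rfl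

lemma mem_Fs {v : List (Fin 2)} {m : ℕ} : v ∈ Fs m ↔ ∃ i, v = factorAt twistedTM i m := by
  constructor
  · rintro ⟨hl, i, hv⟩
    exact ⟨i, by rwa [hl] at hv⟩
  · rintro ⟨i, rfl⟩
    exact ⟨length_factorAt _ _ _, ⟨i, by rw [length_factorAt]⟩⟩

lemma mem_As {v : List (Fin 2)} {m : ℕ} :
    v ∈ As m ↔ ∃ i, 1 ≤ i ∧ v = factorAt twistedTM i m := by
  constructor
  · rintro ⟨hl, h⟩; exact h
  · rintro ⟨i, hi, rfl⟩
    exact ⟨length_factorAt _ _ _, ⟨i, hi, rfl⟩⟩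

lemma Fs_finite (m : ℕ) : (Fs m).Finite := by
  apply Set.Finite.subset (List.finite_length_eq (α := Fin 2) m)
  intro v hv
  exact hv.1

lemma As_subset_Fs (m : ℕ) : As m ⊆ Fs m := by
  intro v hv
  rw [mem_As] at hv
  obtain ⟨i, _, rfl⟩ := hv
  exact mem_Fs.mpr ⟨i, rfl⟩

lemma As_finite (m : ℕ) : (As m).Finite := (Fs_finite m).subset (As_subset_Fs m)

lemma cover (m : ℕ) :
    As m = E0 m '' As ((m+1)/2) ∪ E1 m '' Fs (m/2+1) := by
  ext v
  constructor
  · intro hv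
    rw [mem_As] at hv
    obtain ⟨i, hi, rfl⟩ := hv
    rcases Nat.even_or_odd i with he | ho
    · obtain ⟨k, rfl⟩ := he
      left
      refine ⟨factorAt twistedTM k ((m+1)/2), mem_As.mpr ⟨k, by omega, rfl⟩, ?_⟩
      rw [show k + k = 2*k by ring, cover_even k m (by omega)]
    · obtain ⟨k, rfl⟩ := ho
      right
      exact ⟨factorAt twistedTM k (m/2+1), mem_Fs.mpr ⟨k, rfl⟩, (cover_odd k m).symm⟩
  · rintro (⟨w, hw, rfl⟩ | ⟨w, hw, rfl⟩)
    · rw [mem_As] at hw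
      obtain ⟨k, hk, rfl⟩ := hw
      rw [← cover_even k m hk]
      exact mem_As.mpr ⟨2*k, by omega, rfl⟩
    · rw [mem_Fs] at hw
      obtain ⟨k, rfl⟩ := hw
      rw [← cover_odd k m]
      exact mem_As.mpr ⟨2*k+1, by omega, rfl⟩

lemma count (m : ℕ) (hm : 5 ≤ m) :
    (As m).ncard = (As ((m+1)/2)).ncard + (Fs (m/2+1)).ncard := by
  rw [cover m]
  rw [Set.ncard_union_eq ?disj ((As_finite _).image _) ((Fs_finite _).image _)]
  · rw [Set.ncard_image_of_injOn ((E0_injOn m).mono ?s0),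
      Set.ncard_image_of_injOn ((E1_injOn m (by omega)).mono ?s1)]
    case s0 =>
      intro v hv
      obtain ⟨i, _, rfl⟩ := mem_As.mp hv
      exact length_factorAt _ _ _
    case s1 =>
      intro v hv
      obtain ⟨i, rfl⟩ := mem_Fs.mp hv
      exact length_factorAt _ _ _
  case disj =>
    rw [Set.disjoint_left]
    rintro v ⟨w, hw, rfl⟩ ⟨w', hw', hww⟩
    rw [mem_As] at hw
    obtain ⟨k, hk, rfl⟩ := hw
    rw [mem_Fs] at hw'
    obtain ⟨k', rfl⟩ := hw'
    rw [← cover_even k m hk, ← cover_odd k' m] at hww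
    exact no_even_odd m k k' hm hk hww.symm

lemma pref_vals : twistedTM 3 = 0 ∧ twistedTM 4 = 0 := by
  constructor <;> simp [twistedTM]

lemma pref_not (m : ℕ) (hm : 5 ≤ m) (i : ℕ) (hi : 1 ≤ i) :
    factorAt twistedTM i m ≠ factorAt twistedTM 0 m := by
  intro h
  rw [factorAt_eq_iff] at h
  rcases Nat.even_or_odd i with he | ho
  · obtain ⟨k, rfl⟩ := he
    have h0 := h 0 (by omega)
    have h1 := h 1 (by omega)
    simp only [Nat.add_zero, Nat.zero_add] at h0 h1
    rw [tpval.1] at h0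
    rw [tpval.2.1] at h1
    rw [show k + k = 2*k by ring] at h0 h1 hi
    exact pair k (by omega) (by rw [h0, h1])
  · obtain ⟨k, rfl⟩ := ho
    have h3 := h 3 (by omega)
    have h4 := h 4 (by omega)
    simp only [Nat.zero_add] at h3 h4
    rw [pref_vals.1] at h3
    rw [pref_vals.2] at h4
    rw [show 2*k+1+3 = 2*(k+2) by ring] at h3
    rw [show 2*k+1+4 = 2*(k+2)+1 by ring] at h4
    exact pair (k+2) (by omega) (by rw [h3, h4])

lemma Fs_eq_insert (m : ℕ) : Fs m = insert (factorAt twistedTM 0 m) (As m) := by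
  ext v
  rw [mem_Fs, Set.mem_insert_iff, mem_As]
  constructor
  · rintro ⟨i, rfl⟩
    rcases Nat.eq_zero_or_pos i with rfl | hi
    · left; rfl
    · right; exact ⟨i, hi, rfl⟩
  · rintro (rfl | ⟨i, hi, rfl⟩)
    · exact ⟨0, rfl⟩
    · exact ⟨i, rfl⟩

lemma p_eq_a (m : ℕ) (hm : 5 ≤ m) : (Fs m).ncard = (As m).ncard + 1 := by
  rw [Fs_eq_insert m, Set.ncard_insert_of_notMem ?h (As_finite m)]
  case h =>
    intro hmem
    rw [mem_As] at hmem
    obtain ⟨i, hi, hv⟩ := hmem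
    exact pref_not m hm i hi hv.symm


lemma factorAt_three (u : ℕ → Fin 2) (i : ℕ) :
    factorAt u i 3 = [u i, u (i+1), u (i+2)] := by
  simp [factorAt, List.range_succ]

lemma factorAt_four (u : ℕ → Fin 2) (i : ℕ) :
    factorAt u i 4 = [u i, u (i+1), u (i+2), u (i+3)] := by
  simp [factorAt, List.range_succ]

def S3 : Finset (List (Fin 2)) := {[0,0,1],[0,1,0],[0,1,1],[1,0,0],[1,0,1],[1,1,0]}

def S4 : Finset (List (Fin 2)) :=
  {[0,0,1,0],[0,0,1,1],[0,1,0,0],[0,1,0,1],[0,1,1,0],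
   [1,0,0,1],[1,0,1,0],[1,0,1,1],[1,1,0,0],[1,1,0,1]}

lemma As3 : As 3 = (S3 : Set (List (Fin 2))) := by
  have key3 : ∀ a b c : Fin 2, ¬(a = b ∧ b = c) → [a,b,c] ∈ S3 := by decide
  have hFS : Fs 3 ⊆ (S3 : Set (List (Fin 2))) := by
    intro v hv
    obtain ⟨i, rfl⟩ := mem_Fs.mp hv
    rw [factorAt_three]
    exact_mod_cast key3 _ _ _ (L0 i)
  have hSA : (S3 : Set (List (Fin 2))) ⊆ As 3 := by
    intro v hv
    simp only [S3, Finset.coe_insert, Set.mem_insert_iff, Finset.coe_singleton,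
      Set.mem_singleton_iff] at hv
    rcases hv with rfl | rfl | rfl | rfl | rfl | rfl
    · exact mem_As.mpr ⟨3, by norm_num, by rw [factorAt_three]; norm_num [twistedTM] <;> decide⟩
    · exact mem_As.mpr ⟨1, by norm_num, by rw [factorAt_three]; norm_num [twistedTM] <;> decide⟩
    · exact mem_As.mpr ⟨4, by norm_num, by rw [factorAt_three]; norm_num [twistedTM] <;> decide⟩
    · exact mem_As.mpr ⟨2, by norm_num, by rw [factorAt_three]; norm_num [twistedTM] <;> decide⟩
    · exact mem_As.mpr ⟨6, by norm_num, by rw [factorAt_three]; norm_num [twistedTM] <;> decide⟩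
    · exact mem_As.mpr ⟨5, by norm_num, by rw [factorAt_three]; norm_num [twistedTM] <;> decide⟩
  exact Set.Subset.antisymm ((As_subset_Fs 3).trans hFS) hSA

lemma Fs3 : Fs 3 = (S3 : Set (List (Fin 2))) := by
  have key3 : ∀ a b c : Fin 2, ¬(a = b ∧ b = c) → [a,b,c] ∈ S3 := by decide
  apply Set.Subset.antisymm
  · intro v hv
    obtain ⟨i, rfl⟩ := mem_Fs.mp hv
    rw [factorAt_three]
    exact_mod_cast key3 _ _ _ (L0 i)
  · rw [← As3]; exact As_subset_Fs 3

lemma As4 : As 4 = (S4 : Set (List (Fin 2))) := by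
  have key4 : ∀ a b c d : Fin 2, ¬(a = b ∧ b = c) → ¬(b = c ∧ c = d) → [a,b,c,d] ∈ S4 := by
    decide
  have hFS : Fs 4 ⊆ (S4 : Set (List (Fin 2))) := by
    intro v hv
    obtain ⟨i, rfl⟩ := mem_Fs.mp hv
    rw [factorAt_four]
    have h2 := L0 (i+1)
    rw [show i+1+1 = i+2 by ring, show i+1+2 = i+3 by ring] at h2
    exact_mod_cast key4 _ _ _ _ (L0 i) h2
  have hSA : (S4 : Set (List (Fin 2))) ⊆ As 4 := by
    intro v hv
    simp only [S4, Finset.coe_insert, Set.mem_insert_iff, Finset.coe_singleton,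
      Set.mem_singleton_iff] at hv
    rcases hv with rfl | rfl | rfl | rfl | rfl | rfl | rfl | rfl | rfl | rfl
    · exact mem_As.mpr ⟨9, by norm_num, by rw [factorAt_four]; norm_num [twistedTM] <;> decide⟩
    · exact mem_As.mpr ⟨3, by norm_num, by rw [factorAt_four]; norm_num [twistedTM] <;> decide⟩
    · exact mem_As.mpr ⟨1, by norm_num, by rw [factorAt_four]; norm_num [twistedTM] <;> decide⟩
    · exact mem_As.mpr ⟨10, by norm_num, by rw [factorAt_four]; norm_num [twistedTM] <;> decide⟩
    · exact mem_As.mpr ⟨4, by norm_num, by rw [factorAt_four]; norm_num [twistedTM] <;> decide⟩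
    · exact mem_As.mpr ⟨2, by norm_num, by rw [factorAt_four]; norm_num [twistedTM] <;> decide⟩
    · exact mem_As.mpr ⟨6, by norm_num, by rw [factorAt_four]; norm_num [twistedTM] <;> decide⟩
    · exact mem_As.mpr ⟨11, by norm_num, by rw [factorAt_four]; norm_num [twistedTM] <;> decide⟩
    · exact mem_As.mpr ⟨13, by norm_num, by rw [factorAt_four]; norm_num [twistedTM] <;> decide⟩
    · exact mem_As.mpr ⟨5, by norm_num, by rw [factorAt_four]; norm_num [twistedTM] <;> decide⟩
  exact Set.Subset.antisymm ((As_subset_Fs 4).trans hFS) hSA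

lemma Fs4 : Fs 4 = (S4 : Set (List (Fin 2))) := by
  have key4 : ∀ a b c d : Fin 2, ¬(a = b ∧ b = c) → ¬(b = c ∧ c = d) → [a,b,c,d] ∈ S4 := by
    decide
  apply Set.Subset.antisymm
  · intro v hv
    obtain ⟨i, rfl⟩ := mem_Fs.mp hv
    rw [factorAt_four]
    have h2 := L0 (i+1)
    rw [show i+1+1 = i+2 by ring, show i+1+2 = i+3 by ring] at h2
    exact_mod_cast key4 _ _ _ _ (L0 i) h2
  · rw [← As4]; exact As_subset_Fs 4

lemma a3 : (As 3).ncard = 6 := by rw [As3, Set.ncard_coe_finset]; decide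
lemma a4 : (As 4).ncard = 10 := by rw [As4, Set.ncard_coe_finset]; decide
lemma p3 : (Fs 3).ncard = 6 := by rw [Fs3, Set.ncard_coe_finset]; decide
lemma p4 : (Fs 4).ncard = 10 := by rw [Fs4, Set.ncard_coe_finset]; decide


lemma a5 : (As 5).ncard = 12 := by
  have h := count 5 (by norm_num)
  norm_num at h
  rw [a3, p3] at h
  omega

lemma p5 : (Fs 5).ncard = 13 := by rw [p_eq_a 5 (by norm_num), a5]

lemma p6 : (Fs 6).ncard = 17 := by
  have h := count 6 (by norm_num)
  norm_num at h
  rw [a3, p4] at h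
  rw [p_eq_a 6 (by norm_num), h]

lemma p7 : (Fs 7).ncard = 21 := by
  have h := count 7 (by norm_num)
  norm_num at h
  rw [a4, p4] at h
  rw [p_eq_a 7 (by norm_num), h]

lemma p8 : (Fs 8).ncard = 24 := by
  have h := count 8 (by norm_num)
  norm_num at h
  rw [a4, p5] at h
  rw [p_eq_a 8 (by norm_num), h]

lemma p9 : (Fs 9).ncard = 26 := by
  have h := count 9 (by norm_num)
  norm_num at h
  rw [a5, p5] at h
  rw [p_eq_a 9 (by norm_num), h]

lemma prec_even (m : ℕ) (hm : 5 ≤ m) :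
    (Fs (2*m)).ncard = (Fs m).ncard + (Fs (m+1)).ncard := by
  have hc := count (2*m) (by omega)
  rw [show (2*m+1)/2 = m by omega, show (2*m)/2+1 = m+1 by omega] at hc
  have h1 := p_eq_a (2*m) (by omega)
  have h2 := p_eq_a m hm
  omega

lemma prec_odd (m : ℕ) (hm : 4 ≤ m) :
    (Fs (2*m+1)).ncard = 2 * (Fs (m+1)).ncard := by
  have hc := count (2*m+1) (by omega)
  rw [show (2*m+1+1)/2 = m+1 by omega, show (2*m+1)/2+1 = m+1 by omega] at hc
  have h1 := p_eq_a (2*m+1) (by omega)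
  have h2 := p_eq_a (m+1) (by omega)
  omega

lemma main (i : ℕ) (hi : 2 ≤ i) : ∀ n, 2^i ≤ n → n ≤ 2^(i+1) →
    ((n ≤ 3 * 2 ^ (i - 1) →
      complexity twistedTM (n + 1) = 4 * n - 3 * 2 ^ (i - 2)) ∧
    (3 * 2 ^ (i - 1) ≤ n → n ≤ 7 * 2 ^ (i - 2) →
      complexity twistedTM (n + 1) = 3 * n + 3 * 2 ^ (i - 2)) ∧
    (7 * 2 ^ (i - 2) ≤ n →
      complexity twistedTM (n + 1) = 2 * n + 5 * 2 ^ (i - 1))) := by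
  induction i, hi using Nat.le_induction with
  | base =>
    intro n h1 h2
    simp only [complexity_eq]
    norm_num at h1 h2 ⊢
    interval_cases n
    · exact ⟨fun _ => by norm_num [p5], fun hc _ => by norm_num at hc,
        fun hc => by norm_num at hc⟩
    · exact ⟨fun _ => by norm_num [p6], fun hc _ => by norm_num at hc,
        fun hc => by norm_num at hc⟩
    · exact ⟨fun _ => by norm_num [p7], fun _ _ => by norm_num [p7],
        fun hc => by norm_num at hc⟩
    · exact ⟨fun hc => by norm_num at hc, fun _ _ => by norm_num [p8],
        fun _ => by norm_num [p8]⟩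
    · exact ⟨fun hc => by norm_num at hc, fun _ hc => by norm_num at hc,
        fun _ => by norm_num [p9]⟩
  | succ i hi IH =>
    intro n h1 h2
    simp only [complexity_eq] at IH ⊢
    have hx : 1 ≤ 2^(i-2) := Nat.one_le_two_pow
    have eA : 2^(i-1) = 2^(i-2)*2 := by
      rw [← pow_succ]; congr 1; omega
    have eB : 2^i = 2^(i-2)*4 := by
      rw [show i = i-2+2 by omega, pow_add]; norm_num
    have eC : 2^(i+1) = 2^(i-2)*8 := by
      rw [show i+1 = i-2+3 by omega, pow_add]; norm_num
    have eD : 2^(i+2) = 2^(i-2)*16 := by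
      rw [show i+2 = i-2+4 by omega, pow_add]; norm_num
    rw [show i+1-1 = i by omega, show i+1-2 = i-1 by omega]
    rcases Nat.even_or_odd n with ⟨m, rfl⟩ | ⟨m, rfl⟩
    · rw [show m+m = 2*m by ring] at h1 h2 ⊢
      have hrec : (Fs (2*m+1)).ncard = 2 * (Fs (m+1)).ncard := prec_odd m (by omega)
      have IHm := IH m (by omega) (by omega)
      refine ⟨fun hc => ?_, fun hc1 hc2 => ?_, fun hc => ?_⟩
      · have u1 := IHm.1 (by omega)
        omega
      · have u1 := IHm.2.1 (by omega) (by omega)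
        omega
      · have u1 := IHm.2.2 (by omega)
        omega
    · have hrec : (Fs (2*m+1+1)).ncard = (Fs (m+1)).ncard + (Fs (m+1+1)).ncard := by
        rw [show 2*m+1+1 = 2*(m+1) by ring]
        exact prec_even (m+1) (by omega)
      have IHm := IH m (by omega) (by omega)
      have IHm1 := IH (m+1) (by omega) (by omega)
      refine ⟨fun hc => ?_, fun hc1 hc2 => ?_, fun hc => ?_⟩
      · have u1 := IHm.1 (by omega)
        have u2 := IHm1.1 (by omega)
        omega
      · have u1 := IHm.2.1 (by omega) (by omega)
        have u2 := IHm1.2.1 (by omega) (by omega)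
        omega
      · have u1 := IHm.2.2 (by omega)
        have u2 := IHm1.2.2 (by omega)
        omega

end TTM

/-- The subword complexity of the twisted Thue–Morse word, for `n ≥ 4`,
with `i ≥ 2` the integer such that `2^i ≤ n ≤ 2^(i+1)`. -/
theorem twistedTM_complexity (n i : ℕ) (hn : 4 ≤ n) (hi : 2 ≤ i)
    (h1 : 2 ^ i ≤ n) (h2 : n ≤ 2 ^ (i + 1)) :
    (n ≤ 3 * 2 ^ (i - 1) →
      complexity twistedTM (n + 1) = 4 * n - 3 * 2 ^ (i - 2)) ∧
    (3 * 2 ^ (i - 1) ≤ n → n ≤ 7 * 2 ^ (i - 2) →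
      complexity twistedTM (n + 1) = 3 * n + 3 * 2 ^ (i - 2)) ∧
    (7 * 2 ^ (i - 2) ≤ n →
      complexity twistedTM (n + 1) = 2 * n + 5 * 2 ^ (i - 1)) :=
  TTM.main i hi n h1 h2
end

section
/- Every (7/3)-power-free symmetric infinite binary word u has the same subword complexity as the Thue–Morse word: p_u(n) = p_t(n) for all n ≥ 0. -/
/-- A word is symmetric if its factor set is invariant under every permutation of the alphabet. -/
def SymmetricW {k : ℕ} (u : ℕ → Fin k) : Prop :=
  ∀ f : Equiv.Perm (Fin k), ∀ v : List (Fin k), IsFactor v u → IsFactor (v.map f) u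

namespace SymFree

/-- complement of a binary letter -/
def sw : Fin 2 → Fin 2 := fun a => 1 + a

lemma sw_sw (a : Fin 2) : sw (sw a) = a := by fin_cases a <;> decide

lemma sw_ne (a : Fin 2) : sw a ≠ a := by fin_cases a <;> decide

lemma eq_sw_of_ne {a b : Fin 2} (h : a ≠ b) : b = sw a := by
  revert h; fin_cases a <;> fin_cases b <;> decide

lemma factorAt_length {k : ℕ} (u : ℕ → Fin k) (i m : ℕ) : (factorAt u i m).length = m := by
  simp [factorAt]

lemma factorAt_get? {k : ℕ} (u : ℕ → Fin k) {l : ℕ} (i m : ℕ) (h : l < m) :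
    (factorAt u i m)[l]? = some (u (i + l)) := by
  simp [factorAt, List.getElem?_map, List.getElem?_range h]

lemma isFactor_factorAt {k : ℕ} (u : ℕ → Fin k) (i m : ℕ) : IsFactor (factorAt u i m) u :=
  ⟨i, by rw [factorAt_length]⟩

lemma factorAt_congr {k : ℕ} {u v : ℕ → Fin k} {i j n : ℕ}
    (h : ∀ l < n, u (i + l) = v (j + l)) : factorAt u i n = factorAt v j n := by
  unfold factorAt
  apply List.map_congr_left
  intro a ha
  exact h a (List.mem_range.mp ha)

/-- The key tool: a repetition with `7q ≤ 3m` contradicts 7/3-power-freeness. -/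
lemma no_rep {u : ℕ → Fin 2} (hu : PowerFree (7/3) u) {i q m : ℕ}
    (h1 : 1 ≤ q) (h2 : q ≤ m)
    (hper : ∀ c, c + q < m → u (i + c) = u (i + (c + q)))
    (hexp : 7 * q ≤ 3 * m) : False := by
  have hm : 1 ≤ m := le_trans h1 h2
  have hvl : (factorAt u i m).length = m := factorAt_length ..
  have hne : factorAt u i m ≠ [] := by
    intro h; rw [h] at hvl; simp at hvl; omega
  have hP : HasPer (factorAt u i m) q := by
    refine ⟨h1, by rw [hvl]; exact h2, ?_⟩
    intro l hl
    rw [hvl] at hl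
    rw [factorAt_get? u i m (by omega), factorAt_get? u i m hl]
    exact congrArg some (hper l hl)
  have hle : minPer (factorAt u i m) ≤ q := Nat.sInf_le hP
  have hmem : HasPer (factorAt u i m) (minPer (factorAt u i m)) := Nat.sInf_mem (⟨q, by exact hP⟩ : {q' | HasPer (factorAt u i m) q'}.Nonempty)
  have h1' : 1 ≤ minPer (factorAt u i m) := hmem.1
  have hlt := hu _ hne (isFactor_factorAt u i m)
  rw [exponent, hvl] at hlt
  have hq0 : (0:ℝ) < (q:ℝ) := by exact_mod_cast h1
  have hp0 : (0:ℝ) < ((minPer (factorAt u i m)):ℝ) := by exact_mod_cast h1'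
  have step1 : (7:ℝ)/3 ≤ (m:ℝ)/(q:ℝ) := by
    rw [div_le_div_iff₀ (by norm_num) hq0]
    have : (7:ℝ) * q ≤ 3 * m := by exact_mod_cast hexp
    linarith
  have step2 : (m:ℝ)/(q:ℝ) ≤ (m:ℝ)/((minPer (factorAt u i m)):ℝ) := by
    apply div_le_div_of_nonneg_left _ hp0 _
    · positivity
    · exact_mod_cast hle
  linarith

/-- Converse tool, to establish power-freeness. -/
lemma powerFree_of (w : ℕ → Fin 2)
    (H : ∀ q m i, 1 ≤ q → q ≤ m →
      (∀ c, c + q < m → w (i + c) = w (i + (c + q))) → 7*q ≤ 3*m → False) :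
    PowerFree (7/3) w := by
  intro v hne hfac
  by_contra hcon
  push_neg at hcon
  rcases hfac with ⟨i, hi⟩
  set m := v.length with hm
  have hm1 : 1 ≤ m := by
    rcases v with _ | ⟨a, t⟩
    · exact absurd rfl hne
    · simp [hm]
  have hSne : {q | HasPer v q}.Nonempty := ⟨m, by exact ⟨hm1, le_of_eq hm.symm, fun l hl => by omega⟩⟩
  have hmem : HasPer v (minPer v) := Nat.sInf_mem hSne
  set p := minPer v with hp
  obtain ⟨h1, h2, h3⟩ := hmem
  apply H p m i h1 (by omega)
  · intro c hc
    have hc' : c + p < v.length := by omega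
    have := h3 c hc'
    rw [hi] at this
    rw [factorAt_get? w i v.length (by omega), factorAt_get? w i v.length (by omega)] at this
    exact Option.some_injective _ this
  · rw [exponent] at hcon
    have hp0 : (0:ℝ) < (p:ℝ) := by exact_mod_cast h1
    rw [le_div_iff₀ hp0] at hcon
    have : (7:ℝ) * (p:ℝ) ≤ 3 * (m:ℝ) := by linarith
    exact_mod_cast this

lemma swap_eq_sw (a : Fin 2) : (Equiv.swap (0 : Fin 2) 1) a = sw a := by
  fin_cases a <;> decide

/-- positional form of symmetry (complement direction) -/
lemma sym_pos {u : ℕ → Fin 2} (hs : SymmetricW u) (i n : ℕ) :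
    ∃ i', ∀ l < n, u (i' + l) = sw (u (i + l)) := by
  have h2 := hs (Equiv.swap 0 1) _ (isFactor_factorAt u i n)
  rcases h2 with ⟨i', hi'⟩
  rw [List.length_map, factorAt_length] at hi'
  refine ⟨i', fun l hl => ?_⟩
  have := congrArg (fun t => t[l]?) hi'
  simp only [List.getElem?_map] at this
  rw [factorAt_get? u i n hl, factorAt_get? u i' n hl] at this
  simp only [Option.map_some] at this
  rw [swap_eq_sw] at this
  exact (Option.some_injective _ this).symm

lemma fin2_cases (a : Fin 2) : a = 0 ∨ a = 1 := by revert a; decide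

lemma perm_cases (f : Equiv.Perm (Fin 2)) : (∀ a, f a = a) ∨ (∀ a, f a = sw a) := by
  have hinj := f.injective
  have hne : f 1 ≠ f 0 := fun h => absurd (hinj h) (by decide)
  have key : ∀ b : Fin 2, b ≠ 0 → b = 1 := by decide
  by_cases h : f 0 = 0
  · left
    intro a
    rcases fin2_cases a with rfl | rfl
    · exact h
    · exact key _ (by rw [h] at hne; exact hne)
  · right
    have h1 : f 0 = 1 := key _ h
    have h0 : f 1 = 0 := by
      have hk : ∀ b : Fin 2, b ≠ 1 → b = 0 := by decide
      exact hk _ (by rw [h1] at hne; exact hne)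
    intro a
    rcases fin2_cases a with rfl | rfl
    · rw [h1]; decide
    · rw [h0]; decide

/-- converse: positional complement closure gives symmetry -/
lemma pos_sym {u : ℕ → Fin 2}
    (hpos : ∀ i n, ∃ i', ∀ l < n, u (i' + l) = sw (u (i + l))) : SymmetricW u := by
  intro f v hv
  rcases hv with ⟨i, hi⟩
  rcases perm_cases f with hid | hsw
  · have : v.map f = v := by
      have : v.map f = v.map id := List.map_congr_left (fun a _ => hid a)
      rw [this, List.map_id]
    rw [this]
    exact ⟨i, hi⟩
  · rcases hpos i v.length with ⟨i', hi'⟩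
    refine ⟨i', ?_⟩
    have hlm : (v.map f).length = v.length := List.length_map f
    rw [hlm]
    conv_lhs => rw [hi]
    unfold factorAt
    rw [List.map_map]
    apply List.map_congr_left
    intro a ha
    have ha' := List.mem_range.mp ha
    simp only [Function.comp_apply]
    rw [hsw, hi' a ha']

/- ### Thue-Morse recursions -/

lemma tm_zero : thueMorse 0 = 0 := by simp [thueMorse]

lemma tm_even (n : ℕ) : thueMorse (2*n) = thueMorse n := by
  rcases Nat.eq_zero_or_pos n with h | h
  · rw [h]
  · unfold thueMorse
    rw [Nat.digits_def' (by norm_num : 1 < 2) (by omega)]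
    have h1 : 2*n % 2 = 0 := by omega
    have h2 : 2*n / 2 = n := by omega
    rw [h1, h2]
    simp [List.count_cons]

lemma tm_odd (n : ℕ) : thueMorse (2*n+1) = sw (thueMorse n) := by
  unfold thueMorse
  rw [Nat.digits_def' (by norm_num : 1 < 2) (by omega)]
  have h1 : (2*n+1) % 2 = 1 := by omega
  have h2 : (2*n+1) / 2 = n := by omega
  rw [h1, h2]
  simp only [List.count_cons, sw]
  push_cast
  norm_num [add_comm]
  apply Fin.ext
  simp only [Fin.val_add, Fin.val_ofNat, Fin.val_natCast, Fin.val_one]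
  omega

lemma tm_pow : ∀ k j, j < 2^k → thueMorse (2^k + j) = sw (thueMorse j) := by
  intro k
  induction k with
  | zero =>
    intro j hj
    interval_cases j
    have : (2:ℕ)^0 + 0 = 2*0+1 := by norm_num
    rw [this, tm_odd]
  | succ k IH =>
    intro j hj
    have hpow : 2^(k+1) = 2*2^k := by ring
    rcases Nat.even_or_odd j with ⟨c, hc⟩ | ⟨c, hc⟩
    · have e1 : 2^(k+1) + j = 2*(2^k + c) := by omega
      rw [e1, tm_even, IH c (by omega)]
      have e2 : j = 2*c := by omega
      rw [e2, tm_even]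
    · have e1 : 2^(k+1) + j = 2*(2^k + c) + 1 := by omega
      rw [e1, tm_odd, IH c (by omega)]
      have e2 : j = 2*c+1 := by omega
      rw [e2, tm_odd]

lemma tm_compl (r n : ℕ) : ∃ r', ∀ l < n, thueMorse (r' + l) = sw (thueMorse (r + l)) := by
  refine ⟨2^(r+n) + r, fun l hl => ?_⟩
  have h : r + l < 2^(r+n) := lt_of_lt_of_le (by omega) (Nat.lt_two_pow_self (n := r+n)).le
  have := tm_pow (r+n) (r+l) h
  rw [← this]
  ring_nf

/- ### doubles and the decomposition -/

section Doubles

variable {u : ℕ → Fin 2} (hu : PowerFree (7/3) u)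
include hu

/-- no cube `aaa` -/
lemma no3 (p : ℕ) : ¬ (u p = u (p+1) ∧ u (p+1) = u (p+2)) := by
  rintro ⟨h1, h2⟩
  apply no_rep hu (i := p) (q := 1) (m := 3) le_rfl (by norm_num) _ (by norm_num)
  intro c hc
  have hc2 : c < 2 := by omega
  interval_cases c
  · simpa using h1
  · have : p + 1 + 1 = p + 2 := by ring
    simpa [this] using h2

/-- no alternating block of length 5 -/
lemma alt5 (i : ℕ) (h : ∀ c < 4, u (i+c) ≠ u (i+c+1)) : False := by
  apply no_rep hu (i := i) (q := 2) (m := 5) (by norm_num) (by norm_num) _ (by norm_num)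
  intro c hc
  have h1 := eq_sw_of_ne (h c (by omega))
  have h2 := eq_sw_of_ne (h (c+1) (by omega))
  rw [show i+(c+1)+1 = i+(c+2) by ring, show i+(c+1) = i+c+1 by ring] at h2
  rw [h2, h1, sw_sw]

/-- a double occurs in every window of length 4 -/
lemma d_exists (i : ℕ) : ∃ p, i ≤ p ∧ p ≤ i+3 ∧ u p = u (p+1) := by
  by_contra hcon
  push_neg at hcon
  apply alt5 hu i
  intro c hc h
  exact hcon (i+c) (by omega) (by omega) h

lemma gap3 {p : ℕ} (hp : 1 ≤ p) (h0 : u p = u (p+1)) (h1 : u (p+1) ≠ u (p+2))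
    (h2 : u (p+2) ≠ u (p+3)) (h3 : u (p+3) = u (p+4)) : False := by
  set a := u p with ha
  have e1 : u (p+1) = a := h0.symm
  have e2 : u (p+2) = sw a := by rw [← e1]; exact eq_sw_of_ne h1
  have e3 : u (p+3) = a := by
    have := eq_sw_of_ne h2
    rw [this, e2, sw_sw]
  have e4 : u (p+4) = a := by rw [← h3, e3]
  have e5 : u (p+5) = sw a := by
    have hn : u (p+4) ≠ u (p+5) := by
      intro h
      exact no3 hu (p+3) ⟨h3, by rwa [show p+3+1+1 = p+5 by ring, show p+3+1 = p+4 by ring]⟩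
    rw [← e4]
    exact eq_sw_of_ne hn
  have e6 : u (p-1) = sw a := by
    have hn : u (p-1) ≠ u p := by
      intro h
      apply no3 hu (p-1)
      constructor
      · rwa [show p-1+1 = p by omega]
      · rwa [show p-1+1 = p by omega, show p-1+1+1 = p+1 by omega]
    have := eq_sw_of_ne hn
    -- this : u p = sw (u (p-1)); so u (p-1) = sw a
    rw [← ha] at this
    have : sw (u (p-1)) = a := this.symm
    rw [← this, sw_sw]
  -- now period 3 on window [p-1, p+5] of length 7
  apply no_rep hu (i := p-1) (q := 3) (m := 7) (by norm_num) (by norm_num) _ (by norm_num)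
  intro c hc
  have hc4 : c < 4 := by omega
  interval_cases c
  · rw [show p-1+0 = p-1 by ring, show p-1+(0+3) = p+2 by omega, e6, e2]
  · rw [show p-1+1 = p by omega, show p-1+(1+3) = p+3 by omega, ← ha, e3]
  · rw [show p-1+2 = p+1 by omega, show p-1+(2+3) = p+4 by omega, e1, e4]
  · rw [show p-1+3 = p+2 by omega, show p-1+(3+3) = p+5 by omega, e2, e5]

lemma gap_even : ∀ n p q, q - p = n → 1 ≤ p → p < q → u p = u (p+1) → u q = u (q+1) →
    (q - p) % 2 = 0 := by
  intro n
  induction n using Nat.strong_induction_on with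
  | _ n IH =>
    intro p q hn h1 hpq hp hq
    by_cases hmid : ∃ r, r < q ∧ p < r ∧ u r = u (r+1)
    · rcases hmid with ⟨r, h2r, h1r, hdr⟩
      have e1 := IH (r - p) (by omega) p r rfl h1 h1r hp hdr
      have e2 := IH (q - r) (by omega) r q rfl (by omega) h2r hdr hq
      omega
    · push_neg at hmid
      have hle : q ≤ p + 4 := by
        by_contra hgt
        push_neg at hgt
        apply alt5 hu (p+1)
        intro c hc
        have hnd := hmid (p+1+c) (by omega) (by omega)
        intro h
        exact hnd h
      have h13 : q - p ≠ 1 := by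
        intro h
        have hq' : q = p + 1 := by omega
        exact no3 hu p ⟨hp, by rwa [hq', show p+1+1 = p+1+1 from rfl] at hq⟩
      have h33 : q - p ≠ 3 := by
        intro h3
        have hq' : q = p + 3 := by omega
        apply gap3 hu h1 hp
        · have := hmid (p+1) (by omega) (by omega)
          intro h
          exact this (by rwa [show p+1+1 = p+2 by ring])
        · have := hmid (p+2) (by omega) (by omega)
          intro h
          exact this (by rwa [show p+2+1 = p+3 by ring])
        · rwa [hq', show p+3+1 = p+4 by ring] at hq
      omega

/-- the decomposition: an offset `off ≤ 2` such that `u` is a `μ`-image from `off` on. -/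
lemma decomp : ∃ off, off ≤ 2 ∧ (off = 2 → u 0 = u 1) ∧
    (∀ k, u (off + 2*k + 1) = sw (u (off + 2*k))) := by
  obtain ⟨p, hp1, hp4, hpD⟩ := d_exists hu 1
  have hpar : ∀ q, 1 ≤ q → u q = u (q+1) → q % 2 = p % 2 := by
    intro q h1 hq
    rcases lt_trichotomy p q with h | h | h
    · have := gap_even hu (q - p) p q rfl hp1 h hpD hq
      omega
    · rw [h]
    · have := gap_even hu (p - q) q p rfl h1 h hq hpD
      omega
  by_cases hρ : p % 2 = 0
  · -- all doubles ≥ 1 are even: off = 1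
    refine ⟨1, by norm_num, by norm_num, fun k => ?_⟩
    have hnd : ¬ (u (1 + 2*k) = u (1 + 2*k + 1)) := by
      intro h
      have := hpar (1+2*k) (by omega) h
      omega
    exact (eq_sw_of_ne hnd)
  · by_cases h01 : u 0 = u 1
    · -- doubles odd, u0 = u1 : off = 2
      refine ⟨2, le_rfl, fun _ => h01, fun k => ?_⟩
      have hnd : ¬ (u (2 + 2*k) = u (2 + 2*k + 1)) := by
        intro h
        have := hpar (2+2*k) (by omega) h
        omega
      exact (eq_sw_of_ne hnd)
    · -- doubles odd, u0 ≠ u1 : off = 0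
      refine ⟨0, by norm_num, by norm_num, fun k => ?_⟩
      rcases Nat.eq_zero_or_pos k with hk | hk
      · subst hk
        simpa using (eq_sw_of_ne h01)
      · have hnd : ¬ (u (0 + 2*k) = u (0 + 2*k + 1)) := by
          intro h
          have := hpar (2*k) (by omega) (by rwa [zero_add] at h)
          omega
        exact (eq_sw_of_ne hnd)

end Doubles

section Deriv

variable {u : ℕ → Fin 2} {off : ℕ}

/-- the derived word -/
def dw (u : ℕ → Fin 2) (off : ℕ) : ℕ → Fin 2 := fun k => u (off + 2*k)

lemma powerFree_dw (hu : PowerFree (7/3) u)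
    (hB : ∀ k, u (off + 2*k + 1) = sw (u (off + 2*k))) :
    PowerFree (7/3) (dw u off) := by
  apply powerFree_of
  intro q m j h1 h2 hper hexp
  apply no_rep hu (i := off + 2*j) (q := 2*q) (m := 2*m) (by omega) (by omega) _ (by omega)
  intro c hc
  rcases Nat.even_or_odd c with ⟨d, hd⟩ | ⟨d, hd⟩
  · have hper' := hper d (by omega)
    rw [show off + 2*j + c = off + 2*(j+d) by omega,
        show off + 2*j + (c + 2*q) = off + 2*(j+(d+q)) by omega]
    exact hper'
  · have hper' := hper d (by omega)
    rw [show off + 2*j + c = off + 2*(j+d) + 1 by omega,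
        show off + 2*j + (c + 2*q) = off + 2*(j+(d+q)) + 1 by omega,
        hB, hB]
    exact congrArg sw hper'

/-- positional complement closure of the derived word, for windows of length ≥ 3 -/
lemma dw_compl3 (hs : SymmetricW u) (hoff : off ≤ 2)
    (h2eq : off = 2 → u 0 = u 1)
    (hB : ∀ k, u (off + 2*k + 1) = sw (u (off + 2*k)))
    (hu' : PowerFree (7/3) (dw u off))
    (j m : ℕ) (hm : 3 ≤ m) :
    ∃ i', ∀ l < m, dw u off (i' + l) = sw (dw u off (j + l)) := by
  obtain ⟨i, hi⟩ := sym_pos hs (off + 2*j) (2*m)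
  have hA' : ∀ c, c < m → u (off + 2*j + (2*c+1)) = sw (dw u off (j + c)) := by
    intro c _
    rw [show off + 2*j + (2*c+1) = off + 2*(j+c) + 1 by ring, hB]
    rfl
  rcases lt_or_ge i off with hlt | hge
  · rcases (by omega : i + 1 = off ∨ (i = 0 ∧ off = 2)) with he | ⟨h0, h2⟩
    · -- i = off - 1 : forces dw constant, cube, contradiction
      exfalso
      have E1 : ∀ c, c < m → dw u off c = dw u off (j + c) := by
        intro c hc
        have h := hi (2*c+1) (by omega)
        rw [show i + (2*c+1) = off + 2*c by omega] at h
        rw [hA' c hc, sw_sw] at h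
        exact h
      have E2 : ∀ c, c + 1 < m → dw u off c = dw u off (j + (c+1)) := by
        intro c hc
        have h := hi (2*c+2) (by omega)
        rw [show i + (2*c+2) = off + 2*c + 1 by omega, hB] at h
        rw [show off + 2*j + (2*c+2) = off + 2*(j+(c+1)) by ring] at h
        have h' := congrArg sw h
        rw [sw_sw, sw_sw] at h'
        exact h'
      have hconst : ∀ c, c + 1 < m → dw u off c = dw u off (c+1) := by
        intro c hc
        rw [E2 c hc]
        exact (E1 (c+1) (by omega)).symm
      apply no_rep hu' (i := 0) (q := 1) (m := 3) le_rfl (by norm_num) _ (by norm_num)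
      intro c hc
      have := hconst c (by omega)
      simpa using this
    · -- i = 0, off = 2 : immediate contradiction with u 0 = u 1
      exfalso
      have h01 := h2eq h2
      have g0 := hi 0 (by omega)
      have g1 := hi 1 (by omega)
      rw [show i + 0 = 0 by omega, show off + 2*j + 0 = off + 2*j by ring] at g0
      rw [show i + 1 = 1 by omega, hB] at g1
      rw [sw_sw] at g1
      exact sw_ne _ (g0.symm.trans (h01.trans g1))
  · rcases Nat.even_or_odd (i - off) with ⟨d, hd⟩ | ⟨d, hd⟩
    · -- aligned: direct occurrence
      refine ⟨d, fun c hc => ?_⟩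
      have h := hi (2*c) (by omega)
      rw [show i + 2*c = off + 2*(d+c) by omega,
          show off + 2*j + 2*c = off + 2*(j+c) by ring] at h
      exact h
    · -- misaligned: dw constant, cube, contradiction
      exfalso
      have E1 : ∀ c, c < m → dw u off (d + c) = dw u off (j + c) := by
        intro c hc
        have h := hi (2*c) (by omega)
        rw [show i + 2*c = off + 2*(d+c) + 1 by omega, hB,
            show off + 2*j + 2*c = off + 2*(j+c) by ring] at h
        have h' := congrArg sw h
        rw [sw_sw, sw_sw] at h'
        exact h'
      have E2 : ∀ c, c < m → dw u off (d + c + 1) = dw u off (j + c) := by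
        intro c hc
        have h := hi (2*c+1) (by omega)
        rw [show i + (2*c+1) = off + 2*(d+c+1) by omega] at h
        rw [hA' c hc, sw_sw] at h
        exact h
      apply no_rep hu' (i := d) (q := 1) (m := 3) le_rfl (by norm_num) _ (by norm_num)
      intro c hc
      rw [show d + (c+1) = d + c + 1 by ring, E2 c (by omega)]
      exact E1 c (by omega)

/-- full complement closure of the derived word -/
lemma dw_compl (hs : SymmetricW u) (hoff : off ≤ 2)
    (h2eq : off = 2 → u 0 = u 1)
    (hB : ∀ k, u (off + 2*k + 1) = sw (u (off + 2*k)))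
    (hu' : PowerFree (7/3) (dw u off)) :
    ∀ j n, ∃ i', ∀ l < n, dw u off (i' + l) = sw (dw u off (j + l)) := by
  intro j n
  obtain ⟨i', hi'⟩ := dw_compl3 hs hoff h2eq hB hu' j (max n 3) (le_max_right n 3)
  exact ⟨i', fun l hl => hi' l (lt_of_lt_of_le hl (le_max_left n 3))⟩

/-- the full decomposition bundle -/
lemma deriv_all (hu : PowerFree (7/3) u) (hs : SymmetricW u) :
    ∃ off, off ≤ 2 ∧ (off = 2 → u 0 = u 1) ∧
      (∀ k, u (off + 2*k + 1) = sw (u (off + 2*k))) ∧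
      PowerFree (7/3) (dw u off) ∧ SymmetricW (dw u off) ∧
      (∀ j n, ∃ i', ∀ l < n, dw u off (i' + l) = sw (dw u off (j + l))) := by
  obtain ⟨off, hoff, h2eq, hB⟩ := decomp hu
  have hu' := powerFree_dw hu hB
  have hcompl := dw_compl hs hoff h2eq hB hu'
  exact ⟨off, hoff, h2eq, hB, hu', pos_sym hcompl, hcompl⟩

end Deriv

/- ### Every factor of a symmetric 7/3-free word is a factor of Thue-Morse -/

lemma main_sub : ∀ n, ∀ u : ℕ → Fin 2, PowerFree (7/3) u → SymmetricW u →
    ∀ i, ∃ r, ∀ l < n, thueMorse (r + l) = u (i + l) := by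
  intro n
  induction n using Nat.strong_induction_on with
  | _ n IH =>
  intro u hu hs i
  by_cases hn : n ≤ 2
  · have t0 : thueMorse 0 = 0 := tm_zero
    have t1 : thueMorse 1 = 1 := by
      have h := tm_odd 0
      rw [show 2*0+1 = 1 by norm_num, tm_zero] at h
      rw [h]; decide
    have t2 : thueMorse 2 = 1 := by
      have h := tm_even 1
      rw [show 2*1 = 2 by norm_num, t1] at h
      exact h
    have t3 : thueMorse 3 = 0 := by
      have h := tm_odd 1
      rw [show 2*1+1 = 3 by norm_num, t1] at h
      rw [h]; decide
    have t5 : thueMorse 5 = 0 := by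
      have h := tm_odd 2
      rw [show 2*2+1 = 5 by norm_num, t2] at h
      rw [h]; decide
    have t6 : thueMorse 6 = 0 := by
      have h := tm_even 3
      rw [show 2*3 = 6 by norm_num, t3] at h
      exact h
    have tbl : ∀ a b : Fin 2, ∃ r, thueMorse r = a ∧ thueMorse (r+1) = b := by
      intro a b
      rcases fin2_cases a with rfl | rfl <;> rcases fin2_cases b with rfl | rfl
      · exact ⟨5, t5, by rw [show 5+1 = 6 by norm_num]; exact t6⟩
      · exact ⟨0, t0, by rw [show 0+1 = 1 by norm_num]; exact t1⟩
      · exact ⟨2, t2, by rw [show 2+1 = 3 by norm_num]; exact t3⟩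
      · exact ⟨1, t1, by rw [show 1+1 = 2 by norm_num]; exact t2⟩
    obtain ⟨r, h0, h1⟩ := tbl (u i) (u (i+1))
    refine ⟨r, fun l hl => ?_⟩
    have hl2 : l < 2 := by omega
    interval_cases l
    · rw [add_zero, add_zero]; exact h0
    · exact h1
  · push_neg at hn
    obtain ⟨off, hoff, h2eq, hB, hu', hs', hcompl⟩ := deriv_all hu hs
    have lift : ∀ p, off ≤ p → ∃ r, ∀ l < n, thueMorse (r + l) = u (p + l) := by
      intro p hp
      obtain ⟨r, hr⟩ := IH (n/2 + 1) (by omega) (dw u off) hu' hs' ((p - off)/2)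
      set k := (p - off)/2 with hk
      set ε := (p - off) % 2 with he
      refine ⟨2*r + ε, fun l hl => ?_⟩
      set c := (ε + l)/2 with hc
      set δ := (ε + l) % 2 with hd
      have hcm : c < n/2 + 1 := by omega
      have hrc := hr c hcm
      rcases (by omega : δ = 0 ∨ δ = 1) with h | h
      · have e1 : p + l = off + 2*(k + c) := by omega
        have e2 : 2*r + ε + l = 2*(r + c) := by omega
        rw [e1, e2, tm_even]
        exact hrc
      · have e1 : p + l = off + 2*(k + c) + 1 := by omega
        have e2 : 2*r + ε + l = 2*(r + c) + 1 := by omega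
        rw [e1, e2, tm_odd, hB]
        exact congrArg sw hrc
    obtain ⟨i2, hi2⟩ := sym_pos hs i n
    rcases le_or_gt off i with h | h
    · exact lift i h
    · rcases le_or_gt off i2 with h2 | h2
      · obtain ⟨r, hr⟩ := lift i2 h2
        obtain ⟨r', hr'⟩ := tm_compl r n
        refine ⟨r', fun l hl => ?_⟩
        rw [hr' l hl, hr l hl, hi2 l hl, sw_sw]
      · exfalso
        have h0 := hi2 0 (by omega)
        rw [add_zero, add_zero] at h0
        rcases (by omega : i = i2 ∨ (off = 2 ∧ ((i = 0 ∧ i2 = 1) ∨ (i = 1 ∧ i2 = 0)))) with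
          he | ⟨ho, hcs⟩
        · rw [he] at h0
          exact sw_ne _ h0.symm
        · have h01 := h2eq ho
          rcases hcs with ⟨e1, e2⟩ | ⟨e1, e2⟩
          · rw [e1, e2] at h0
            rw [← h01] at h0
            exact sw_ne _ h0.symm
          · rw [e1, e2] at h0
            rw [h01] at h0
            exact sw_ne _ h0.symm

/- ### Every factor of Thue-Morse is a factor of u -/

lemma main_sup : ∀ K, ∀ u : ℕ → Fin 2, PowerFree (7/3) u → SymmetricW u →
    (∃ i, ∀ j < 2^K, u (i + j) = thueMorse j) ∧
    (∃ i, ∀ j < 2^K, u (i + j) = sw (thueMorse j)) := by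
  intro K
  induction K with
  | zero =>
    intro u hu hs
    obtain ⟨i', hi'⟩ := sym_pos hs 0 1
    have h0 := hi' 0 (by norm_num)
    rw [add_zero, add_zero] at h0
    have key : ∀ b : Fin 2, ∃ p, u p = b := by
      intro b
      rcases fin2_cases (u 0) with h | h
      · rcases fin2_cases b with rfl | rfl
        · exact ⟨0, h⟩
        · exact ⟨i', by rw [h0, h]; decide⟩
      · rcases fin2_cases b with rfl | rfl
        · exact ⟨i', by rw [h0, h]; decide⟩
        · exact ⟨0, h⟩
    constructor
    · obtain ⟨p, hp⟩ := key 0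
      refine ⟨p, fun j hj => ?_⟩
      have hj0 : j = 0 := by simpa using hj
      subst hj0
      rw [add_zero, tm_zero]
      exact hp
    · obtain ⟨p, hp⟩ := key 1
      refine ⟨p, fun j hj => ?_⟩
      have hj0 : j = 0 := by simpa using hj
      subst hj0
      rw [add_zero, tm_zero, hp]
      decide
  | succ K IH =>
    intro u hu hs
    obtain ⟨off, hoff, h2eq, hB, hu', hs', -⟩ := deriv_all hu hs
    obtain ⟨⟨i1, h1⟩, ⟨i2, h2⟩⟩ := IH (dw u off) hu' hs'
    have hpow : 2^(K+1) = 2*2^K := by ring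
    constructor
    · refine ⟨off + 2*i1, fun j hj => ?_⟩
      rcases Nat.even_or_odd j with ⟨c, hcj⟩ | ⟨c, hcj⟩
      · have hcK : c < 2^K := by omega
        rw [show off + 2*i1 + j = off + 2*(i1 + c) by omega,
            show j = 2*c by omega, tm_even]
        exact h1 c hcK
      · have hcK : c < 2^K := by omega
        rw [show off + 2*i1 + j = off + 2*(i1 + c) + 1 by omega, hB,
            show j = 2*c+1 by omega, tm_odd]
        exact congrArg sw (h1 c hcK)
    · refine ⟨off + 2*i2, fun j hj => ?_⟩
      rcases Nat.even_or_odd j with ⟨c, hcj⟩ | ⟨c, hcj⟩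
      · have hcK : c < 2^K := by omega
        rw [show off + 2*i2 + j = off + 2*(i2 + c) by omega,
            show j = 2*c by omega, tm_even]
        exact h2 c hcK
      · have hcK : c < 2^K := by omega
        rw [show off + 2*i2 + j = off + 2*(i2 + c) + 1 by omega, hB,
            show j = 2*c+1 by omega, tm_odd]
        exact congrArg sw (h2 c hcK)

/- ### assembly -/

lemma factor_iff (u : ℕ → Fin 2) (hu : PowerFree (7/3) u) (hsym : SymmetricW u)
    (v : List (Fin 2)) (n : ℕ) (hlen : v.length = n) :
    IsFactor v u ↔ IsFactor v thueMorse := by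
  constructor
  · rintro ⟨i, hi⟩
    obtain ⟨r, hr⟩ := main_sub n u hu hsym i
    refine ⟨r, ?_⟩
    rw [hlen] at hi ⊢
    rw [hi]
    exact factorAt_congr (fun l hl => (hr l hl).symm)
  · rintro ⟨r, hr⟩
    obtain ⟨⟨i, hi⟩, -⟩ := main_sup (r + n) u hu hsym
    refine ⟨i + r, ?_⟩
    rw [hlen] at hr ⊢
    rw [hr]
    apply factorAt_congr
    intro l hl
    have hb : r + l < 2^(r+n) := lt_of_lt_of_le (by omega) (Nat.lt_two_pow_self (n := r+n)).le
    have h := hi (r + l) hb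
    rw [show i + (r + l) = i + r + l by ring] at h
    exact h.symm

end SymFree

/-- Every (7/3)-power-free symmetric infinite binary word has the subword
complexity of the Thue–Morse word. -/
theorem symmetric_73_free_complexity (u : ℕ → Fin 2)
    (hu : PowerFree (7 / 3) u) (hsym : SymmetricW u) :
    ∀ n, complexity u n = complexity thueMorse n := by
  intro n
  unfold complexity
  congr 1
  ext v
  simp only [Set.mem_setOf_eq]
  constructor
  · rintro ⟨hl, hf⟩
    exact ⟨hl, (SymFree.factor_iff u hu hsym v n hl).mp hf⟩
  · rintro ⟨hl, hf⟩
    exact ⟨hl, (SymFree.factor_iff u hu hsym v n hl).mpr hf⟩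
end
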